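/- Let X be a set, Y a nonempty subset of X, and S(Y) a subsemigroup of T(Y). Then T_{S(Y)}(X) is an inverse semigroup if and only if S(Y) is an inverse semigroup and either Y = X or |X| = 2. -/
import Mathlib


open Set Function

/-- `S` is a subsemigroup of the full transformation semigroup on `A`
(closed under composition; composition order is irrelevant here since we
quantify over all ordered pairs). -/
def IsSubsemigroupOn {A : Type*} (S : Set (A → A)) : Prop :=
  ∀ a ∈ S, ∀ b ∈ S, a ∘ b ∈ S

/-- `S` is a subgroup of `Sym(A)`. -/
def IsSubgroupOfSym {A : Type*} (S : Set (A → A)) : Prop :=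
  IsSubsemigroupOn S ∧ (∀ a ∈ S, Function.Bijective a) ∧ (id ∈ S) ∧
    ∀ a ∈ S, ∃ b ∈ S, a ∘ b = id ∧ b ∘ a = id

/-- `S` is a regular semigroup of transformations: every `a ∈ S` has `b ∈ S`
with `aba = a` (composed left to right, i.e. `x ↦ a (b (a x))`). -/
def IsRegularOn {A : Type*} (S : Set (A → A)) : Prop :=
  ∀ a ∈ S, ∃ b ∈ S, a ∘ b ∘ a = a

/-- `S` is an inverse semigroup of transformations. -/
def IsInverseOn {A : Type*} (S : Set (A → A)) : Prop :=
  ∀ a ∈ S, ∃! b, b ∈ S ∧ a ∘ b ∘ a = a ∧ b ∘ a ∘ b = b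

/-- `u` is a unit of the transformation monoid `S`. -/
def IsUnitOn {A : Type*} (S : Set (A → A)) (u : A → A) : Prop :=
  u ∈ S ∧ ∃ v ∈ S, u ∘ v = id ∧ v ∘ u = id

/-- `a` is a unit-regular element of `S`. -/
def UnitRegularElem {A : Type*} (S : Set (A → A)) (a : A → A) : Prop :=
  ∃ u, IsUnitOn S u ∧ a ∘ u ∘ a = a

/-- `S` is a unit-regular transformation monoid. -/
def IsUnitRegularOn {A : Type*} (S : Set (A → A)) : Prop :=
  ∀ a ∈ S, UnitRegularElem S a

/-- `T` is a transversal of `ker f`: it contains exactly one element of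
each kernel class. -/
def IsTransversalOf {A : Type*} (f : A → A) (T : Set A) : Prop :=
  ∀ x : A, ∃! t, t ∈ T ∧ f t = f x

/-- `T'` is a transversal of the kernel of the restriction of `f` to `Y`,
viewed inside the ambient set. -/
def IsTransversalOfOn {A : Type*} (f : A → A) (Y T' : Set A) : Prop :=
  T' ⊆ Y ∧ ∀ y ∈ Y, ∃! t, t ∈ T' ∧ f t = f y

/-- The semigroup `T_{S(Y)}(X)` of all transformations of `X` that leave `Y`
invariant and whose restriction-corestriction to `Y` lies in `S`. -/
def TSemi {X : Type*} (Y : Set X) (S : Set (Y → Y)) : Set (X → X) :=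
  {f | ∃ h : MapsTo f Y Y, MapsTo.restrict f Y Y h ∈ S}


section helpers

variable {X : Type*} (Y : Set X)

open Classical in
noncomputable def extMap (a : Y → Y) (d : X → X) : X → X :=
  fun x => if h : x ∈ Y then ↑(a ⟨x, h⟩) else d x

theorem extMap_pos (a : Y → Y) (d : X → X) {x : X} (h : x ∈ Y) :
    extMap Y a d x = ↑(a ⟨x, h⟩) := by unfold extMap; exact dif_pos h

theorem extMap_neg (a : Y → Y) (d : X → X) {x : X} (h : x ∉ Y) :
    extMap Y a d x = d x := by unfold extMap; exact dif_neg h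

theorem extMap_coe (a : Y → Y) (d : X → X) (t : Y) :
    extMap Y a d ↑t = ↑(a t) := by
  rw [extMap_pos Y a d t.2]

theorem extMap_mapsTo (a : Y → Y) (d : X → X) : MapsTo (extMap Y a d) Y Y := by
  intro x hx
  rw [extMap_pos Y a d hx]
  exact (a ⟨x, hx⟩).2

theorem extMap_restrict (a : Y → Y) (d : X → X) :
    MapsTo.restrict _ Y Y (extMap_mapsTo Y a d) = a := by
  funext t
  apply Subtype.ext
  exact extMap_coe Y a d t

theorem extMap_mem {S : Set (Y → Y)} {a : Y → Y} (ha : a ∈ S) (d : X → X) :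
    extMap Y a d ∈ TSemi Y S :=
  ⟨extMap_mapsTo Y a d, by rw [extMap_restrict]; exact ha⟩

end helpers

section part2

variable {X : Type*} (Y : Set X)

theorem extMap_rel {y0 : X} (hy0 : y0 ∈ Y) (a b : Y → Y)
    (h1 : ∀ t, a (b (a t)) = a t) :
    extMap Y a (fun _ => ↑(a ⟨y0, hy0⟩)) ∘ extMap Y b (fun _ => ↑(b ⟨y0, hy0⟩)) ∘
      extMap Y a (fun _ => ↑(a ⟨y0, hy0⟩)) = extMap Y a (fun _ => ↑(a ⟨y0, hy0⟩)) := by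
  funext x
  show extMap Y a _ (extMap Y b _ (extMap Y a _ x)) = extMap Y a _ x
  by_cases hx : x ∈ Y
  · rw [extMap_pos Y a _ hx, extMap_coe, extMap_coe]
    exact congrArg Subtype.val (h1 ⟨x, hx⟩)
  · rw [extMap_neg Y a _ hx]
    show extMap Y a _ (extMap Y b _ ↑(a ⟨y0, hy0⟩)) = ↑(a ⟨y0, hy0⟩)
    rw [extMap_coe, extMap_coe]
    exact congrArg Subtype.val (h1 ⟨y0, hy0⟩)

theorem S_inv_of_T_inv {S : Set (Y → Y)} (hY : Y.Nonempty)
    (hT : IsInverseOn (TSemi Y S)) : IsInverseOn S := by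
  obtain ⟨y0, hy0⟩ := hY
  intro a haS
  obtain ⟨g, ⟨⟨hgm, hgS⟩, hg1, hg2⟩, hgu⟩ :=
    hT (extMap Y a fun _ => ↑(a ⟨y0, hy0⟩)) (extMap_mem Y haS _)
  refine ⟨MapsTo.restrict g Y Y hgm, ⟨hgS, ?_, ?_⟩, ?_⟩
  · funext t
    apply Subtype.ext
    show (↑(a (MapsTo.restrict g Y Y hgm (a t))) : X) = ↑(a t)
    have key := congrFun hg1 ↑t
    simp only [Function.comp_apply, extMap_coe] at key
    calc (↑(a (MapsTo.restrict g Y Y hgm (a t))) : X)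
        = extMap Y a (fun _ => ↑(a ⟨y0, hy0⟩)) ↑(MapsTo.restrict g Y Y hgm (a t)) :=
          (extMap_coe Y a _ _).symm
      _ = extMap Y a (fun _ => ↑(a ⟨y0, hy0⟩)) (g ↑(a t)) := rfl
      _ = ↑(a t) := key
  · funext t
    apply Subtype.ext
    show (g ↑(a (MapsTo.restrict g Y Y hgm t)) : X) = g ↑t
    have key := congrFun hg2 ↑t
    simp only [Function.comp_apply, extMap_coe] at key
    calc g ↑(a (MapsTo.restrict g Y Y hgm t))
        = g (extMap Y a (fun _ => ↑(a ⟨y0, hy0⟩)) ↑(MapsTo.restrict g Y Y hgm t)) := by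
          rw [extMap_coe]
      _ = g (extMap Y a (fun _ => ↑(a ⟨y0, hy0⟩)) (g ↑t)) := rfl
      _ = g ↑t := key
  · rintro b' ⟨hb'S, hb'1, hb'2⟩
    have h1' : ∀ t, a (b' (a t)) = a t := fun t => congrFun hb'1 t
    have h2' : ∀ t, b' (a (b' t)) = b' t := fun t => congrFun hb'2 t
    have e1 := extMap_rel Y hy0 a b' h1'
    have e2 := extMap_rel Y hy0 b' a h2'
    have hbg : extMap Y b' (fun _ => ↑(b' ⟨y0, hy0⟩)) = g :=
      hgu _ ⟨extMap_mem Y hb'S _, e1, e2⟩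
    funext t
    apply Subtype.ext
    show (↑(b' t) : X) = g ↑t
    rw [← hbg, extMap_coe]

end part2

section part3

variable {X : Type*} (Y : Set X)

theorem T_inv_of_univ {S : Set (Y → Y)} (hu : ∀ x : X, x ∈ Y)
    (hSinv : IsInverseOn S) : IsInverseOn (TSemi Y S) := by
  rintro a ⟨ham, haS⟩
  obtain ⟨B, ⟨hBS, hB1, hB2⟩, hBu⟩ := hSinv (MapsTo.restrict a Y Y ham) haS
  have hbcoe : ∀ t : Y, (fun x => (↑(B ⟨x, hu x⟩) : X)) ↑t = ↑(B t) := fun t =>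
    congrArg Subtype.val (congrArg B (Subtype.coe_eta t (hu ↑t)))
  refine ⟨fun x => ↑(B ⟨x, hu x⟩), ⟨⟨fun x _ => (B ⟨x, hu x⟩).2, ?_⟩, ?_, ?_⟩, ?_⟩
  · have : MapsTo.restrict (fun x => (↑(B ⟨x, hu x⟩) : X)) Y Y (fun x _ => (B ⟨x, hu x⟩).2) = B := by
      funext t
      apply Subtype.ext
      exact hbcoe t
    rw [this]; exact hBS
  · funext x
    show a ((fun x => (↑(B ⟨x, hu x⟩) : X)) (a x)) = a x
    calc a ((fun x => (↑(B ⟨x, hu x⟩) : X)) (a x))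
        = a ((fun x => (↑(B ⟨x, hu x⟩) : X)) ↑(MapsTo.restrict a Y Y ham ⟨x, hu x⟩)) := rfl
      _ = a ↑(B (MapsTo.restrict a Y Y ham ⟨x, hu x⟩)) := by rw [hbcoe]
      _ = ↑(MapsTo.restrict a Y Y ham (B (MapsTo.restrict a Y Y ham ⟨x, hu x⟩))) := rfl
      _ = ↑(MapsTo.restrict a Y Y ham ⟨x, hu x⟩) := congrArg Subtype.val (congrFun hB1 ⟨x, hu x⟩)
      _ = a x := rfl
  · funext x
    show (fun x => (↑(B ⟨x, hu x⟩) : X)) (a ((fun x => (↑(B ⟨x, hu x⟩) : X)) x)) =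
      (fun x => (↑(B ⟨x, hu x⟩) : X)) x
    calc (fun x => (↑(B ⟨x, hu x⟩) : X)) (a ((fun x => (↑(B ⟨x, hu x⟩) : X)) x))
        = (fun x => (↑(B ⟨x, hu x⟩) : X)) ↑(MapsTo.restrict a Y Y ham (B ⟨x, hu x⟩)) := rfl
      _ = ↑(B (MapsTo.restrict a Y Y ham (B ⟨x, hu x⟩))) := by rw [hbcoe]
      _ = ↑(B ⟨x, hu x⟩) := congrArg Subtype.val (congrFun hB2 ⟨x, hu x⟩)
  · rintro b' ⟨⟨hb'm, hb'S⟩, h1, h2⟩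
    have hB'1 : MapsTo.restrict a Y Y ham ∘ MapsTo.restrict b' Y Y hb'm ∘ MapsTo.restrict a Y Y ham
        = MapsTo.restrict a Y Y ham := by
      funext t
      apply Subtype.ext
      exact congrFun h1 ↑t
    have hB'2 : MapsTo.restrict b' Y Y hb'm ∘ MapsTo.restrict a Y Y ham ∘ MapsTo.restrict b' Y Y hb'm
        = MapsTo.restrict b' Y Y hb'm := by
      funext t
      apply Subtype.ext
      exact congrFun h2 ↑t
    have hBB : MapsTo.restrict b' Y Y hb'm = B := hBu _ ⟨hb'S, hB'1, hB'2⟩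
    funext x
    show b' x = ↑(B ⟨x, hu x⟩)
    rw [← hBB]
    rfl

end part3

section part4

variable {X : Type*} (Y : Set X)

theorem T_inv_card2 {S : Set (Y → Y)} {p y0 : X} (hy0 : y0 ∈ Y) (hp : p ∉ Y)
    (hd : ∀ x : X, x = p ∨ x = y0) (hSne : S.Nonempty) :
    IsInverseOn (TSemi Y S) := by
  have hpy : p ≠ y0 := fun h => hp (h ▸ hy0)
  have hYiff : ∀ x, x ∈ Y ↔ x = y0 := fun x =>
    ⟨fun hx => (hd x).resolve_left (fun h => hp (h ▸ hx)), fun h => h ▸ hy0⟩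
  have hsub : ∀ s t : (Y → Y), s = t := by
    intro s t
    have hv : ∀ v : Y, v = ⟨y0, hy0⟩ := fun v => Subtype.ext ((hYiff ↑v).1 v.2)
    funext u
    rw [hv (s u), hv (t u)]
  obtain ⟨s0, hs0⟩ := hSne
  have hmem : ∀ f : X → X, f y0 = y0 → f ∈ TSemi Y S := by
    intro f hf
    have hm : MapsTo f Y Y := fun x hx => by
      rw [(hYiff x).1 hx, hf]; exact hy0
    exact ⟨hm, by rw [hsub (MapsTo.restrict f Y Y hm) s0]; exact hs0⟩
  intro a ha
  obtain ⟨ham, -⟩ := ha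
  have hay : a y0 = y0 := (hYiff _).1 (ham hy0)
  have haT : a ∈ TSemi Y S := hmem a hay
  rcases hd (a p) with hap | hap
  · have haid : ∀ x, a x = x := fun x => by rcases hd x with h | h <;> rw [h] <;> assumption
    refine ⟨a, ⟨haT, ?_, ?_⟩, ?_⟩
    · funext x; show a (a (a x)) = a x; rw [haid, haid]
    · funext x; show a (a (a x)) = a x; rw [haid, haid]
    · rintro b ⟨⟨hbm, -⟩, hb1, hb2⟩
      have hby : b y0 = y0 := (hYiff _).1 (hbm hy0)
      have h1 := congrFun hb1 p
      simp only [Function.comp_apply, haid] at h1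
      funext x
      rcases hd x with h | h
      · rw [h, h1, haid]
      · rw [h, hby, hay]
  · have haa : ∀ x, a (a (a x)) = a x := by
      intro x
      rcases hd x with h | h
      · rw [h, hap, hay, hay]
      · rw [h, hay, hay, hay]
    refine ⟨a, ⟨haT, ?_, ?_⟩, ?_⟩
    · funext x; exact haa x
    · funext x; exact haa x
    · rintro b ⟨⟨hbm, -⟩, hb1, hb2⟩
      have hby : b y0 = y0 := (hYiff _).1 (hbm hy0)
      have h2 := congrFun hb2 p
      simp only [Function.comp_apply] at h2
      rcases hd (b p) with hbp | hbp
      · exfalso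
        rw [hbp, hap, hby] at h2
        exact hpy h2.symm
      · funext x
        rcases hd x with h | h
        · rw [h, hbp, hap]
        · rw [h, hby, hay]

end part4

section part5

variable {X : Type*} (Y : Set X)

theorem ext3_pos (e : Y → Y) (heid : ∀ t, e (e t) = e t) (d1 d2 d3 : X → X)
    {x : X} (hx : x ∈ Y) :
    extMap Y e d1 (extMap Y e d2 (extMap Y e d3 x)) = extMap Y e d3 x := by
  rw [extMap_pos Y e d3 hx, extMap_coe, extMap_coe, heid, heid]

theorem B1_rel (e : Y → Y) (heid : ∀ t, e (e t) = e t) (t s : Y) (ht : e t = t) :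
    extMap Y e (fun _ => (↑t : X)) ∘ extMap Y e (fun _ => (↑s : X)) ∘
      extMap Y e (fun _ => (↑t : X)) = extMap Y e (fun _ => (↑t : X)) := by
  funext x
  simp only [Function.comp_apply]
  by_cases hx : x ∈ Y
  · exact ext3_pos Y e heid _ _ _ hx
  · have h0 : extMap Y e (fun _ => (↑t : X)) x = ↑t := extMap_neg Y e _ hx
    rw [h0, extMap_coe, ht, extMap_coe, ht]

theorem Y_univ_or_card2 {S : Set (Y → Y)} (hY : Y.Nonempty)
    (hSne : S.Nonempty) (hS : ∀ a ∈ S, ∀ b ∈ S, a ∘ b ∈ S)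
    (hT : IsInverseOn (TSemi Y S)) : Y = Set.univ ∨ Nat.card X = 2 := by
  classical
  by_contra hcon
  push_neg at hcon
  obtain ⟨hYne, hcard⟩ := hcon
  obtain ⟨p, hp⟩ := (Set.ne_univ_iff_exists_notMem Y).1 hYne
  obtain ⟨y0, hy0⟩ := hY
  have hSinv := S_inv_of_T_inv Y ⟨y0, hy0⟩ hT
  obtain ⟨a0, ha0⟩ := hSne
  obtain ⟨b0, ⟨hb0S, hb01, hb02⟩, -⟩ := hSinv a0 ha0
  have heS : a0 ∘ b0 ∈ S := hS a0 ha0 b0 hb0S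
  set e := a0 ∘ b0 with he
  have heid : ∀ t, e (e t) = e t := by
    intro t
    rw [he]
    exact congrFun hb01 (b0 t)
  by_cases hfix : ∃ t1 t2 : Y, e t1 = t1 ∧ e t2 = t2 ∧ t1 ≠ t2
  · obtain ⟨t1, t2, ht1, ht2, hne⟩ := hfix
    have h1 := B1_rel Y e heid t1 t2 ht1
    have h2 := B1_rel Y e heid t2 t1 ht2
    have h3 := B1_rel Y e heid t1 t1 ht1
    have hgg := (hT _ (extMap_mem Y heS (fun _ => (↑t1 : X)))).unique
      ⟨extMap_mem Y heS _, h3, h3⟩ ⟨extMap_mem Y heS _, h1, h2⟩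
    have hpp := congrFun hgg p
    rw [extMap_neg Y e _ hp, extMap_neg Y e _ hp] at hpp
    exact hne (Subtype.coe_injective hpp)
  · push_neg at hfix
    set u := e ⟨y0, hy0⟩ with hu_def
    have hu : e u = u := by rw [hu_def]; exact heid _
    have hconst : ∀ t, e t = u := fun t => hfix (e t) u (heid t) hu
    by_cases hq : ∃ q, q ∉ Y ∧ q ≠ p
    · -- case A : two points outside Y
      obtain ⟨q, hqY, hqp⟩ := hq
      have hfp : extMap Y e (fun x => if x = p then q else (↑u : X)) p = q := by
        rw [extMap_neg Y e _ hp]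
        simp
      have hfx : ∀ x, x ∉ Y → x ≠ p →
          extMap Y e (fun x => if x = p then q else (↑u : X)) x = ↑u := by
        intro x hx hxp
        rw [extMap_neg Y e _ hx]
        simp [hxp]
      have hg1off : ∀ x, x ∉ Y → extMap Y e (fun _ => p) x = p := fun x hx =>
        extMap_neg Y e _ hx
      have hg2p : extMap Y e (fun x => if x = p then (↑u : X) else p) p = ↑u := by
        rw [extMap_neg Y e _ hp]
        simp
      have hg2off : ∀ x, x ∉ Y → x ≠ p →
          extMap Y e (fun x => if x = p then (↑u : X) else p) x = p := by
        intro x hx hxp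
        rw [extMap_neg Y e _ hx]
        simp [hxp]
      have id1 : extMap Y e (fun x => if x = p then q else (↑u : X)) ∘
          extMap Y e (fun _ => p) ∘ extMap Y e (fun x => if x = p then q else (↑u : X)) =
          extMap Y e (fun x => if x = p then q else (↑u : X)) := by
        funext x
        simp only [Function.comp_apply]
        by_cases hx : x ∈ Y
        · exact ext3_pos Y e heid _ _ _ hx
        · by_cases hxp : x = p
          · subst hxp
            rw [hfp, hg1off q hqY, hfp]
          · rw [hfx x hx hxp, extMap_coe, hu, extMap_coe, hu]
      have id2 : extMap Y e (fun _ => p) ∘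
          extMap Y e (fun x => if x = p then q else (↑u : X)) ∘ extMap Y e (fun _ => p) =
          extMap Y e (fun _ => p) := by
        funext x
        simp only [Function.comp_apply]
        by_cases hx : x ∈ Y
        · exact ext3_pos Y e heid _ _ _ hx
        · rw [hg1off x hx, hfp, hg1off q hqY]
      have id3 : extMap Y e (fun x => if x = p then q else (↑u : X)) ∘
          extMap Y e (fun x => if x = p then (↑u : X) else p) ∘
          extMap Y e (fun x => if x = p then q else (↑u : X)) =
          extMap Y e (fun x => if x = p then q else (↑u : X)) := by
        funext x
        simp only [Function.comp_apply]
        by_cases hx : x ∈ Y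
        · exact ext3_pos Y e heid _ _ _ hx
        · by_cases hxp : x = p
          · subst hxp
            rw [hfp, hg2off q hqY hqp, hfp]
          · rw [hfx x hx hxp, extMap_coe, hu, extMap_coe, hu]
      have id4 : extMap Y e (fun x => if x = p then (↑u : X) else p) ∘
          extMap Y e (fun x => if x = p then q else (↑u : X)) ∘
          extMap Y e (fun x => if x = p then (↑u : X) else p) =
          extMap Y e (fun x => if x = p then (↑u : X) else p) := by
        funext x
        simp only [Function.comp_apply]
        by_cases hx : x ∈ Y
        · exact ext3_pos Y e heid _ _ _ hx
        · by_cases hxp : x = p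
          · subst hxp
            rw [hg2p, extMap_coe, hu, extMap_coe, hu]
          · rw [hg2off x hx hxp, hfp, hg2off q hqY hqp]
      have hgg := (hT _ (extMap_mem Y heS (fun x => if x = p then q else (↑u : X)))).unique
        ⟨extMap_mem Y heS _, id1, id2⟩ ⟨extMap_mem Y heS _, id3, id4⟩
      have hpp := congrFun hgg p
      rw [hg1off p hp, hg2p] at hpp
      exact hp (by rw [hpp]; exact u.2)
    · -- case B2 : Y = X \ {p}, e constant
      push_neg at hq
      have hw : ∃ w : X, w ≠ p ∧ w ≠ ↑u := by
        by_contra h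
        push_neg at h
        apply hcard
        rw [Nat.card_eq_two_iff]
        refine ⟨p, ↑u, fun hpu => hp (by rw [hpu]; exact u.2), ?_⟩
        apply Set.eq_univ_of_forall
        intro x
        rcases eq_or_ne x p with h1 | h1
        · rw [h1]; exact Set.mem_insert _ _
        · rw [h x h1]; exact Set.mem_insert_of_mem _ rfl
      obtain ⟨w, hwp, hwu⟩ := hw
      have hwY : w ∈ Y := by_contra (fun h => hwp (hq w h))
      obtain ⟨g, ⟨⟨hgm, -⟩, h1, -⟩, -⟩ := hT (extMap Y e (fun _ => w)) (extMap_mem Y heS _)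
      have key := congrFun h1 p
      simp only [Function.comp_apply] at key
      have hfp : extMap Y e (fun _ => w) p = w := extMap_neg Y e _ hp
      rw [hfp] at key
      have hgw : extMap Y e (fun _ => w) (g w) = ↑u := by
        rw [extMap_pos Y e _ (hgm hwY), hconst]
      rw [hgw] at key
      exact hwu key.symm

end part5


theorem stmt3 {X : Type*} (Y : Set X) (S : Set (Y → Y)) (hY : Y.Nonempty)
    (hSne : S.Nonempty) (hS : IsSubsemigroupOn S) :
    IsInverseOn (TSemi Y S) ↔
      (IsInverseOn S ∧ (Y = Set.univ ∨ Nat.card X = 2)) := by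
  constructor
  · intro hT
    exact ⟨S_inv_of_T_inv Y hY hT, Y_univ_or_card2 Y hY hSne hS hT⟩
  · rintro ⟨hSinv, hYor | hc⟩
    · exact T_inv_of_univ Y (fun x => by rw [hYor]; trivial) hSinv
    · by_cases hYu : Y = Set.univ
      · exact T_inv_of_univ Y (fun x => by rw [hYu]; trivial) hSinv
      · obtain ⟨p, hp⟩ := (Set.ne_univ_iff_exists_notMem Y).1 hYu
        obtain ⟨y0, hy0⟩ := hY
        have hpy : p ≠ y0 := fun h => hp (h ▸ hy0)
        obtain ⟨aa, bb, hab, huniv⟩ := Nat.card_eq_two_iff.1 hc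
        have hall : ∀ x : X, x = aa ∨ x = bb := by
          intro x
          have hx : x ∈ ({aa, bb} : Set X) := by rw [huniv]; trivial
          simpa using hx
        have hd : ∀ x : X, x = p ∨ x = y0 := by
          rcases hall p with hpa | hpb
          · rcases hall y0 with hya | hyb
            · exact absurd (hpa.trans hya.symm) hpy
            · intro x
              rcases hall x with h | h
              · exact Or.inl (h.trans hpa.symm)
              · exact Or.inr (h.trans hyb.symm)
          · rcases hall y0 with hya | hyb
            · intro x
              rcases hall x with h | h
              · exact Or.inr (h.trans hya.symm)
              · exact Or.inl (h.trans hpb.symm)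
            · exact absurd (hpb.trans hyb.symm) hpy
        exact T_inv_card2 Y hy0 hp hd hSne
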